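/- For the m-player Hypercube game, the deterministic classical strategy in which every player assigns +1 to all vertices, except that player 1 assigns -1 to the vertex (1,1,...,1) when q₁ = 1, wins exactly on the 2^{m-1} + 1 questions q with q₁ = 0 or q = (1,0,...,0), giving winning probability 1/2 + 1/2^m. -/

import Mathlib

open scoped Classical

/-- The deterministic strategy: player `i`, receiving question bit `qi`, assigns `-1`
to the vertex `(1,…,1)` if `i` is the first player and `qi = 1`, and `+1` everywhere else. -/
noncomputable def hcStrat (m : ℕ) (i : Fin m) (qi : Bool) (x : Fin m → Bool) : ℝ :=
  if (i : ℕ) = 0 ∧ qi = true ∧ x = (fun _ => true) then -1 else 1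

/-- The winning predicate of the `m`-player Hypercube game for question `q`, when the
players use the strategy `hcStrat`: parity (the product of player `i`'s assignments on
the facet `x_i = q_i` is `1`, except `(-1)^{q₁}` for the first player) and consistency
(any two players agree on common vertices). -/
def hcWin (m : ℕ) (q : Fin m → Bool) : Prop :=
  (∀ i : Fin m,
      (∏ x ∈ Finset.univ.filter (fun x : Fin m → Bool => x i = q i), hcStrat m i (q i) x) =
        (if (i : ℕ) = 0 ∧ q i = true then -1 else 1)) ∧
  (∀ i j : Fin m, ∀ x : Fin m → Bool, x i = q i → x j = q j →
      hcStrat m i (q i) x = hcStrat m j (q j) x)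

theorem stmt_16 (m : ℕ) (hm : 2 ≤ m) :
    (∀ q : Fin m → Bool,
        hcWin m q ↔ (q ⟨0, by omega⟩ = false ∨ q = fun i : Fin m => decide ((i : ℕ) = 0))) ∧
    (Finset.univ.filter (fun q : Fin m → Bool => hcWin m q)).card = 2 ^ (m - 1) + 1 ∧
    ((Finset.univ.filter (fun q : Fin m → Bool => hcWin m q)).card : ℝ) / 2 ^ m =
      1 / 2 + 1 / 2 ^ m := by
  have hm0 : 0 < m := by omega
  -- parity always holds
  have parity : ∀ q : Fin m → Bool, ∀ i : Fin m,
      (∏ x ∈ Finset.univ.filter (fun x : Fin m → Bool => x i = q i), hcStrat m i (q i) x) =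
        (if (i : ℕ) = 0 ∧ q i = true then -1 else 1) := by
    intro q i
    by_cases h : (i : ℕ) = 0 ∧ q i = true
    · rw [if_pos h]
      rw [Finset.prod_eq_single (fun _ => true)]
      · simp [hcStrat, h.1, h.2]
      · intro b hb hbne
        simp only [hcStrat]
        rw [if_neg]
        rintro ⟨_, _, h3⟩; exact hbne h3
      · intro hmem
        exfalso; apply hmem
        simp [h.2]
    · rw [if_neg h]
      apply Finset.prod_eq_one
      intro x _
      simp only [hcStrat]
      rw [if_neg]
      rintro ⟨h1, h2, _⟩; exact h ⟨h1, h2⟩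
  have hiff : ∀ q : Fin m → Bool,
      hcWin m q ↔ (q ⟨0, hm0⟩ = false ∨ q = fun i : Fin m => decide ((i : ℕ) = 0)) := by
    intro q
    constructor
    · rintro ⟨hpar, hcon⟩
      by_contra hq
      push_neg at hq
      obtain ⟨h0, hne⟩ := hq
      have h0' : q ⟨0, hm0⟩ = true := by
        cases h : q ⟨0, hm0⟩ with
        | false => exact absurd h h0
        | true => rfl
      have hexj : ∃ j : Fin m, q j = true ∧ (j : ℕ) ≠ 0 := by
        by_contra hc
        push_neg at hc
        apply hne
        funext k
        by_cases hk : (k : ℕ) = 0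
        · have hk' : k = ⟨0, hm0⟩ := Fin.ext hk
          rw [hk', h0']; simp [hk]
        · have hqk : q k ≠ true := fun h => hk (hc k h)
          simp only [Bool.not_eq_true] at hqk
          rw [hqk]; simp [hk]
      obtain ⟨j, hqj, hj0⟩ := hexj
      have hcc := hcon ⟨0, hm0⟩ j (fun _ => true) (by simp [h0']) (by simp [hqj])
      simp only [hcStrat, h0', hj0] at hcc
      norm_num at hcc
    · intro h
      refine ⟨parity q, ?_⟩
      rcases h with h0 | he
      · intro i j x hxi hxj
        have hall : ∀ k : Fin m, hcStrat m k (q k) x = 1 := by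
          intro k
          simp only [hcStrat]
          rw [if_neg]
          rintro ⟨hk0, hkt, _⟩
          have hk' : k = ⟨0, hm0⟩ := Fin.ext hk0
          rw [hk', h0] at hkt
          exact Bool.false_ne_true hkt
        rw [hall i, hall j]
      · subst he
        intro i j x hxi hxj
        by_cases hx : x = fun _ => true
        · have hi : (i : ℕ) = 0 := by
            by_contra hi
            rw [hx] at hxi
            simp [hi] at hxi
          have hj : (j : ℕ) = 0 := by
            by_contra hj
            rw [hx] at hxj
            simp [hj] at hxj
          have hij : i = j := Fin.ext (hi.trans hj.symm)
          rw [hij]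
        · simp only [hcStrat]
          rw [if_neg (by rintro ⟨_, _, h3⟩; exact hx h3),
            if_neg (by rintro ⟨_, _, h3⟩; exact hx h3)]
  -- counting
  have hfilter : (Finset.univ.filter (fun q : Fin m → Bool => hcWin m q)) =
      (Finset.univ.filter (fun q : Fin m → Bool => q ⟨0, hm0⟩ = false)) ∪
        {fun i : Fin m => decide ((i : ℕ) = 0)} := by
    ext q
    simp only [Finset.mem_filter, Finset.mem_univ, true_and, Finset.mem_union,
      Finset.mem_singleton]
    exact hiff q
  have hAB : (Finset.univ.filter (fun q : Fin m → Bool => q ⟨0, hm0⟩ = false)).card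
      = (Finset.univ.filter (fun q : Fin m → Bool => q ⟨0, hm0⟩ = true)).card := by
    refine Finset.card_nbij' (fun q => Function.update q ⟨0, hm0⟩ (!q ⟨0, hm0⟩))
      (fun q => Function.update q ⟨0, hm0⟩ (!q ⟨0, hm0⟩)) ?_ ?_ ?_ ?_
    · intro a ha
      simp only [Finset.mem_coe, Finset.mem_filter, Finset.mem_univ, true_and] at ha ⊢
      simp [ha]
    · intro a ha
      simp only [Finset.mem_coe, Finset.mem_filter, Finset.mem_univ, true_and] at ha ⊢
      simp [ha]
    · intro a _
      funext k
      by_cases hk : k = ⟨0, hm0⟩ <;> simp [Function.update, hk]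
    · intro a _
      funext k
      by_cases hk : k = ⟨0, hm0⟩ <;> simp [Function.update, hk]
  have hsum : (Finset.univ.filter (fun q : Fin m → Bool => q ⟨0, hm0⟩ = false)).card
      + (Finset.univ.filter (fun q : Fin m → Bool => q ⟨0, hm0⟩ = true)).card = 2 ^ m := by
    have heq : (Finset.univ.filter (fun q : Fin m → Bool => ¬ q ⟨0, hm0⟩ = false))
        = (Finset.univ.filter (fun q : Fin m → Bool => q ⟨0, hm0⟩ = true)) := by
      ext q; simp
    have h2 := Finset.card_filter_add_card_filter_not
      (s := (Finset.univ : Finset (Fin m → Bool)))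
      (p := fun q => q ⟨0, hm0⟩ = false)
    rw [heq, Finset.card_univ] at h2
    have hcf : Fintype.card (Fin m → Bool) = 2 ^ m := by
      simp [Fintype.card_fun]
    rw [hcf] at h2
    exact h2
  have hA : (Finset.univ.filter (fun q : Fin m → Bool => q ⟨0, hm0⟩ = false)).card
      = 2 ^ (m - 1) := by
    have hp : 2 ^ m = 2 * 2 ^ (m - 1) := by
      calc 2 ^ m = 2 ^ (m - 1 + 1) := by rw [Nat.sub_add_cancel hm0]
        _ = 2 * 2 ^ (m - 1) := by rw [pow_succ]; ring
    have h2A : 2 * (Finset.univ.filter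
        (fun q : Fin m → Bool => q ⟨0, hm0⟩ = false)).card = 2 * 2 ^ (m - 1) := by
      rw [two_mul]
      rw [← hp, ← hsum, hAB]
    exact Nat.eq_of_mul_eq_mul_left (by norm_num) h2A
  have hnotmem : (fun i : Fin m => decide ((i : ℕ) = 0)) ∉
      (Finset.univ.filter (fun q : Fin m → Bool => q ⟨0, hm0⟩ = false)) := by
    simp only [Finset.mem_filter, Finset.mem_univ, true_and]
    simp
  have hcard : (Finset.univ.filter (fun q : Fin m → Bool => hcWin m q)).card
      = 2 ^ (m - 1) + 1 := by
    rw [hfilter, Finset.card_union_of_disjoint (by simpa using hnotmem), hA,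
      Finset.card_singleton]
  refine ⟨hiff, hcard, ?_⟩
  rw [hcard]
  have hp : (2 : ℝ) ^ m = 2 * 2 ^ (m - 1) := by
    calc (2 : ℝ) ^ m = 2 ^ (m - 1 + 1) := by rw [Nat.sub_add_cancel hm0]
      _ = 2 * 2 ^ (m - 1) := by rw [pow_succ]; ring
  push_cast
  rw [hp]
  have h1 : (2 : ℝ) ^ (m - 1) ≠ 0 := by positivity
  field_simp
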